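/- Let M, L be independent uniform random variables on Z_2, and let Y_1 = L, Y_2 = M + L, Y_3 = LM, Y_4 = LM + M (arithmetic in Z_2). Then the mutual informations I(M; Y_1, Y_3), I(M; Y_1, Y_4), I(M; Y_2, Y_3), and I(M; Y_2, Y_4) all equal 1/2 (in bits). -/
import Mathlib


open Finset

/-- Shannon entropy (base 2) of a finite random variable `f` on a finite probability
space with mass function `p`. -/
noncomputable def ent {Ω α : Type*} [Fintype Ω] [Fintype α] [DecidableEq α]
    (p : Ω → ℝ) (f : Ω → α) : ℝ :=
  ∑ a : α, -((∑ ω : Ω, if f ω = a then p ω else 0) *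
    Real.logb 2 (∑ ω : Ω, if f ω = a then p ω else 0))

/-- Shannon mutual information (base 2) `I(f; g) = H(f) + H(g) - H(f,g)`. -/
noncomputable def mutInfo {Ω α β : Type*} [Fintype Ω] [Fintype α] [Fintype β]
    [DecidableEq α] [DecidableEq β] (p : Ω → ℝ) (f : Ω → α) (g : Ω → β) : ℝ :=
  ent p f + ent p g - ent p (fun ω => (f ω, g ω))

lemma zuniv : (Finset.univ : Finset (ZMod 2)) = {0, 1} := by decide

lemma lb2 : Real.logb 2 (1/2 : ℝ) = -1 := by
  rw [one_div, Real.logb_inv, Real.logb_self_eq_one] <;> norm_num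

lemma lb4 : Real.logb 2 (1/4 : ℝ) = -2 := by
  have : (1/4 : ℝ) = ((1/2 : ℝ)) ^ (2:ℕ) := by norm_num
  rw [this, Real.logb_pow, lb2]; norm_num

/-- For `(M, L)` uniform on `Z_2 × Z_2`, with `Y₁ = L`, `Y₂ = M + L`, `Y₃ = LM`,
`Y₄ = LM + M`, all four leakages `I(M; Y_i, Y_j)` (`i ∈ {1,2}`, `j ∈ {3,4}`) equal `1/2`. -/
theorem standard_nonlinear_code_leakage :
    mutInfo (fun _ : ZMod 2 × ZMod 2 => (1 : ℝ)/4) (fun ω => ω.1)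
      (fun ω => (ω.2, ω.2 * ω.1)) = 1/2 ∧
    mutInfo (fun _ : ZMod 2 × ZMod 2 => (1 : ℝ)/4) (fun ω => ω.1)
      (fun ω => (ω.2, ω.2 * ω.1 + ω.1)) = 1/2 ∧
    mutInfo (fun _ : ZMod 2 × ZMod 2 => (1 : ℝ)/4) (fun ω => ω.1)
      (fun ω => (ω.1 + ω.2, ω.2 * ω.1)) = 1/2 ∧
    mutInfo (fun _ : ZMod 2 × ZMod 2 => (1 : ℝ)/4) (fun ω => ω.1)
      (fun ω => (ω.1 + ω.2, ω.2 * ω.1 + ω.1)) = 1/2 := by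
  refine ⟨?_, ?_, ?_, ?_⟩ <;>
  · simp (config := { decide := true }) only [mutInfo, ent, Fintype.sum_prod_type, zuniv,
      Finset.sum_insert, Finset.mem_singleton, Finset.sum_singleton, Prod.mk.injEq]
    norm_num [lb2, lb4]
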